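/- Let m ≥ 2. No representation (V₋₁, V₀, f₀, f₁) of the Kronecker quiver K₂ with dim V₋₁ = dim V₀ = m is stable: every such representation admits a subrepresentation (W₋₁, W₀), different from (0,0) and (V₋₁,V₀), with dim W₀ ≤ dim W₋₁. -/

import Mathlib

/-- A subrepresentation of a representation `f : Fin n → (V₁ →ₗ[ℂ] V₀)` of the `n`-arrow
Kronecker quiver: a pair of subspaces stable under all the maps. -/
def KroneckerSubrep {n : ℕ} {V₁ V₀ : Type} [AddCommGroup V₁] [Module ℂ V₁]
    [AddCommGroup V₀] [Module ℂ V₀] (f : Fin n → V₁ →ₗ[ℂ] V₀)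
    (W₁ : Submodule ℂ V₁) (W₀ : Submodule ℂ V₀) : Prop :=
  ∀ i, ∀ x ∈ W₁, f i x ∈ W₀

/-- Stability of a representation of the `n`-arrow Kronecker quiver: every
subrepresentation other than `(0,0)` and `(V₁,V₀)` satisfies the strict inequality
`dim V₁ · dim W₀ - dim V₀ · dim W₁ > 0`. -/
def KroneckerStable {n : ℕ} {V₁ V₀ : Type} [AddCommGroup V₁] [Module ℂ V₁]
    [AddCommGroup V₀] [Module ℂ V₀] (f : Fin n → V₁ →ₗ[ℂ] V₀) : Prop :=
  ∀ (W₁ : Submodule ℂ V₁) (W₀ : Submodule ℂ V₀), KroneckerSubrep f W₁ W₀ →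
    ¬(W₁ = ⊥ ∧ W₀ = ⊥) → ¬(W₁ = ⊤ ∧ W₀ = ⊤) →
    0 < (Module.finrank ℂ V₁ : ℤ) * (Module.finrank ℂ ↥W₀ : ℤ) -
        (Module.finrank ℂ V₀ : ℤ) * (Module.finrank ℂ ↥W₁ : ℤ)

/-- For `m ≥ 2`, no representation of `K₂` of dimension vector `(m, m)`
is stable: every such representation admits a proper nonzero subrepresentation `(W₁, W₀)`
with `dim W₀ ≤ dim W₁`. -/
theorem not_stable_dim_m_m (m : ℕ) (hm : 2 ≤ m)
    (V₁ V₀ : Type) [AddCommGroup V₁] [Module ℂ V₁] [FiniteDimensional ℂ V₁]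
    [AddCommGroup V₀] [Module ℂ V₀] [FiniteDimensional ℂ V₀]
    (f : Fin 2 → V₁ →ₗ[ℂ] V₀)
    (h1 : Module.finrank ℂ V₁ = m) (h0 : Module.finrank ℂ V₀ = m) :
    ¬ KroneckerStable f ∧
      ∃ (W₁ : Submodule ℂ V₁) (W₀ : Submodule ℂ V₀),
        KroneckerSubrep f W₁ W₀ ∧ ¬(W₁ = ⊥ ∧ W₀ = ⊥) ∧ ¬(W₁ = ⊤ ∧ W₀ = ⊤) ∧
        Module.finrank ℂ ↥W₀ ≤ Module.finrank ℂ ↥W₁ := by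
  -- First find `v ≠ 0` and `w` with `f 0 v` and `f 1 v` both in `span {w}`.
  have hnt : Nontrivial V₁ := Module.nontrivial_of_finrank_pos (R := ℂ) (by omega)
  obtain ⟨v, hv, w, hw0, hw1⟩ :
      ∃ v : V₁, v ≠ 0 ∧ ∃ w : V₀, f 0 v ∈ Submodule.span ℂ {w} ∧
        f 1 v ∈ Submodule.span ℂ {w} := by
    by_cases hinj : Function.Injective (f 1)
    · -- eigenvector of (f 1)⁻¹ ∘ f 0
      let e := (f 1).linearEquivOfInjective hinj (h1.trans h0.symm)
      obtain ⟨c, hc⟩ := Module.End.exists_eigenvalue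
        (e.symm.toLinearMap ∘ₗ f 0 : Module.End ℂ V₁)
      obtain ⟨v, hv⟩ := hc.exists_hasEigenvector
      refine ⟨v, hv.right, f 1 v, ?_, Submodule.mem_span_singleton_self _⟩
      have h := hv.apply_eq_smul
      have : f 0 v = c • f 1 v := by
        have := congrArg e h
        simpa [e, LinearMap.linearEquivOfInjective_apply, map_smul] using this
      rw [this]
      exact Submodule.smul_mem _ _ (Submodule.mem_span_singleton_self _)
    · rw [← LinearMap.ker_eq_bot] at hinj
      obtain ⟨v, hvmem, hv⟩ := Submodule.exists_mem_ne_zero_of_ne_bot hinj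
      refine ⟨v, hv, f 0 v, Submodule.mem_span_singleton_self _, ?_⟩
      simp [LinearMap.mem_ker.mp hvmem]
  set W₁ : Submodule ℂ V₁ := Submodule.span ℂ {v}
  set W₀ : Submodule ℂ V₀ := Submodule.span ℂ {w}
  have hsub : KroneckerSubrep f W₁ W₀ := by
    intro i x hx
    obtain ⟨a, rfl⟩ := Submodule.mem_span_singleton.mp hx
    rw [map_smul]
    refine Submodule.smul_mem _ _ ?_
    fin_cases i
    · exact hw0
    · exact hw1
  have hd1 : Module.finrank ℂ ↥W₁ = 1 := finrank_span_singleton hv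
  have hd0 : Module.finrank ℂ ↥W₀ ≤ 1 := by
    rcases eq_or_ne w 0 with rfl | hw
    · show Module.finrank ℂ ↥(Submodule.span ℂ {(0 : V₀)}) ≤ 1; rw [Submodule.span_zero_singleton]; simp [finrank_bot]
    · rw [finrank_span_singleton hw]
  have hbot : ¬(W₁ = ⊥ ∧ W₀ = ⊥) := by
    rintro ⟨h, -⟩
    exact hv (Submodule.span_singleton_eq_bot.mp h)
  have htop : ¬(W₁ = ⊤ ∧ W₀ = ⊤) := by
    rintro ⟨h, -⟩
    have := h ▸ finrank_top ℂ V₁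
    omega
  have hle : Module.finrank ℂ ↥W₀ ≤ Module.finrank ℂ ↥W₁ := by omega
  refine ⟨?_, W₁, W₀, hsub, hbot, htop, hle⟩
  intro hst
  have := hst W₁ W₀ hsub hbot htop
  rw [h1, h0] at this
  have : (m : ℤ) * (Module.finrank ℂ ↥W₀ : ℤ) ≤ (m : ℤ) * (Module.finrank ℂ ↥W₁ : ℤ) := by
    exact_mod_cast Nat.mul_le_mul_left m hle
  linarith
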